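/- Let A₁ ∈ ℂ^{M₁×N₁} and A₂ ∈ ℂ^{M₂×N₂}, and let A = A₁ ⊗ A₂ act on 3-level block vectors in ℂ^{N₁'·N₂'·N₃'} where N₁ = N₁'N₂' and N₂ = N₃'. Then for any tuple s = (s₁,s₂,s₃) of positive integers with s₁ ≤ N₁', s₂ ≤ N₂', s₃ ≤ N₃', the hierarchical restricted isometry constant satisfies δ_{(s₁,s₂,s₃)}(A₁ ⊗ A₂) ≤ (1 + δ_{(s₁,s₂)}(A₁))(1 + δ_{s₃}(A₂)) − 1, where δ_{(s₁,s₂)}(A₁) is the 2-level HiRIP constant of A₁ viewed as acting on 2-level block vectors in ℂ^{N₁'·N₂'}. -/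
import Mathlib


open scoped Classical

noncomputable section

/-- A vector is `s`-sparse if at most `s` of its entries are nonzero. -/
def Sparse {ι : Type*} [Fintype ι] (s : ℕ) (x : ι → ℂ) : Prop :=
  (Finset.univ.filter fun i => x i ≠ 0).card ≤ s

/-- Squared Euclidean norm. -/
def sqNorm {ι : Type*} [Fintype ι] (x : ι → ℂ) : ℝ := ∑ i, ‖x i‖ ^ 2

/-- Euclidean norm. -/
def enorm {ι : Type*} [Fintype ι] (x : ι → ℂ) : ℝ := Real.sqrt (sqNorm x)

/-- The restricted isometry constant `δ_s(A)`: the smallest `δ ≥ 0` such that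
`(1−δ)‖x‖² ≤ ‖Ax‖² ≤ (1+δ)‖x‖²` for every `s`-sparse `x`. -/
def RIPconst {m n : Type*} [Fintype m] [Fintype n] (A : Matrix m n ℂ) (s : ℕ) : ℝ :=
  sInf {δ : ℝ | 0 ≤ δ ∧ ∀ x : n → ℂ, Sparse s x →
    (1 - δ) * sqNorm x ≤ sqNorm (A.mulVec x) ∧ sqNorm (A.mulVec x) ≤ (1 + δ) * sqNorm x}

/-- `(s₁,s₂,s₃)`-hierarchical sparsity of a 3-level block vector: at most `s₁`
of the `N₁` level-1 blocks are nonzero, within each block at most `s₂` of the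
`N₂` level-2 blocks are nonzero, and each of those contains at most `s₃`
nonzero entries. -/
def HiSparse3 {N₁ N₂ N₃ : ℕ} (s₁ s₂ s₃ : ℕ) (x : Fin N₁ × Fin N₂ × Fin N₃ → ℂ) : Prop :=
  (Finset.univ.filter fun i₁ : Fin N₁ => (fun p : Fin N₂ × Fin N₃ => x (i₁, p)) ≠ 0).card ≤ s₁ ∧
  ∀ i₁ : Fin N₁,
    (Finset.univ.filter fun i₂ : Fin N₂ => (fun i₃ : Fin N₃ => x (i₁, i₂, i₃)) ≠ 0).card ≤ s₂ ∧
    ∀ i₂ : Fin N₂, Sparse s₃ (fun i₃ : Fin N₃ => x (i₁, i₂, i₃))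

/-- The hierarchical restricted isometry constant `δ_{(s₁,s₂,s₃)}(A)` of a
matrix acting on 3-level block vectors. -/
def HiRIPconst3 {m : Type*} [Fintype m] {N₁ N₂ N₃ : ℕ}
    (A : Matrix m (Fin N₁ × Fin N₂ × Fin N₃) ℂ) (s₁ s₂ s₃ : ℕ) : ℝ :=
  sInf {δ : ℝ | 0 ≤ δ ∧ ∀ x : Fin N₁ × Fin N₂ × Fin N₃ → ℂ, HiSparse3 s₁ s₂ s₃ x →
    (1 - δ) * sqNorm x ≤ sqNorm (A.mulVec x) ∧ sqNorm (A.mulVec x) ≤ (1 + δ) * sqNorm x}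

/-- `(s₁,s₂)`-hierarchical sparsity of a 2-level block vector. -/
def HiSparse2 {N₁ N₂ : ℕ} (s₁ s₂ : ℕ) (x : Fin N₁ × Fin N₂ → ℂ) : Prop :=
  (Finset.univ.filter fun i₁ : Fin N₁ => (fun i₂ : Fin N₂ => x (i₁, i₂)) ≠ 0).card ≤ s₁ ∧
  ∀ i₁ : Fin N₁, Sparse s₂ (fun i₂ : Fin N₂ => x (i₁, i₂))

/-- The 2-level hierarchical restricted isometry constant `δ_{(s₁,s₂)}(A)`. -/
def HiRIPconst2 {m : Type*} [Fintype m] {N₁ N₂ : ℕ}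
    (A : Matrix m (Fin N₁ × Fin N₂) ℂ) (s₁ s₂ : ℕ) : ℝ :=
  sInf {δ : ℝ | 0 ≤ δ ∧ ∀ x : Fin N₁ × Fin N₂ → ℂ, HiSparse2 s₁ s₂ x →
    (1 - δ) * sqNorm x ≤ sqNorm (A.mulVec x) ∧ sqNorm (A.mulVec x) ≤ (1 + δ) * sqNorm x}

namespace HiRIPAux

variable {m n : Type*} [Fintype m] [Fintype n]

lemma sqNorm_nonneg {ι : Type*} [Fintype ι] (x : ι → ℂ) : 0 ≤ sqNorm x :=
  Finset.sum_nonneg fun _ _ => sq_nonneg _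

lemma sqNorm_mulVec_le (A : Matrix m n ℂ) (x : n → ℂ) :
    sqNorm (A.mulVec x) ≤ (∑ r, ∑ j, ‖A r j‖ ^ 2) * sqNorm x := by
  unfold sqNorm
  rw [Finset.sum_mul]
  refine Finset.sum_le_sum fun r _ => ?_
  have h1 : ‖A.mulVec x r‖ ≤ ∑ j, ‖A r j‖ * ‖x j‖ := by
    rw [Matrix.mulVec, dotProduct]
    exact (norm_sum_le _ _).trans (le_of_eq (by simp [norm_mul]))
  have h2 : (∑ j, ‖A r j‖ * ‖x j‖) ^ 2 ≤ (∑ j, ‖A r j‖ ^ 2) * ∑ j, ‖x j‖ ^ 2 :=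
    Finset.sum_mul_sq_le_sq_mul_sq _ _ _
  calc ‖A.mulVec x r‖ ^ 2 ≤ (∑ j, ‖A r j‖ * ‖x j‖) ^ 2 := by
        apply pow_le_pow_left₀ (norm_nonneg _) h1
    _ ≤ _ := h2

def RIPset (A : Matrix m n ℂ) (P : (n → ℂ) → Prop) : Set ℝ :=
  {δ : ℝ | 0 ≤ δ ∧ ∀ x : n → ℂ, P x →
    (1 - δ) * sqNorm x ≤ sqNorm (A.mulVec x) ∧ sqNorm (A.mulVec x) ≤ (1 + δ) * sqNorm x}

lemma RIPset_nonempty (A : Matrix m n ℂ) (P : (n → ℂ) → Prop) : (RIPset A P).Nonempty := by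
  set C : ℝ := ∑ r, ∑ j, ‖A r j‖ ^ 2 with hCdef
  have hC : (0:ℝ) ≤ C := by positivity
  refine ⟨1 + C, by positivity, fun x _ => ⟨?_, ?_⟩⟩
  · have h1 := sqNorm_nonneg (A.mulVec x)
    have h2 := sqNorm_nonneg x
    nlinarith
  · have h1 := sqNorm_mulVec_le A x
    have h2 := sqNorm_nonneg x
    rw [← hCdef] at h1
    nlinarith

lemma RIPset_mem_add (A : Matrix m n ℂ) (P : (n → ℂ) → Prop) {ε : ℝ} (hε : 0 < ε) :
    sInf (RIPset A P) + ε ∈ RIPset A P := by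
  have hne := RIPset_nonempty A P
  obtain ⟨δ, hδ, hlt⟩ := exists_lt_of_csInf_lt hne
    (lt_add_of_pos_right _ hε : sInf (RIPset A P) < sInf (RIPset A P) + ε)
  refine ⟨le_trans hδ.1 hlt.le, fun x hx => ?_⟩
  obtain ⟨h1, h2⟩ := hδ.2 x hx
  have hx0 := sqNorm_nonneg x
  exact ⟨by nlinarith, by nlinarith⟩

lemma RIPset_sInf_nonneg (A : Matrix m n ℂ) (P : (n → ℂ) → Prop) :
    0 ≤ sInf (RIPset A P) :=
  le_csInf (RIPset_nonempty A P) fun δ hδ => hδ.1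

end HiRIPAux

set_option maxHeartbeats 1000000 in
/-- For a Kronecker product `A = A₁ ⊗ A₂` acting on 3-level
block vectors in `ℂ^{N₁'·N₂'·N₃'}` with `N₁ = N₁'N₂'` and `N₂ = N₃'`, one has
`δ_{(s₁,s₂,s₃)}(A₁ ⊗ A₂) ≤ (1 + δ_{(s₁,s₂)}(A₁))(1 + δ_{s₃}(A₂)) − 1`, where
`δ_{(s₁,s₂)}(A₁)` is the 2-level HiRIP constant of `A₁` viewed as acting on
2-level block vectors in `ℂ^{N₁'·N₂'}`. -/
theorem hiRIP_kronecker_inner_hi (M₁ M₂ N₁' N₂' N₃' s₁ s₂ s₃ : ℕ)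
    (hs₁ : 0 < s₁) (hs₂ : 0 < s₂) (hs₃ : 0 < s₃)
    (hN₁ : s₁ ≤ N₁') (hN₂ : s₂ ≤ N₂') (hN₃ : s₃ ≤ N₃')
    (A₁ : Matrix (Fin M₁) (Fin N₁' × Fin N₂') ℂ) (A₂ : Matrix (Fin M₂) (Fin N₃') ℂ)
    (A : Matrix (Fin M₁ × Fin M₂) (Fin N₁' × Fin N₂' × Fin N₃') ℂ)
    (hA : A = fun r j => A₁ r.1 (j.1, j.2.1) * A₂ r.2 j.2.2) :
    HiRIPconst3 A s₁ s₂ s₃ ≤ (1 + HiRIPconst2 A₁ s₁ s₂) * (1 + RIPconst A₂ s₃) - 1 := by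
  have hH2 : HiRIPconst2 A₁ s₁ s₂ = sInf (HiRIPAux.RIPset A₁ (HiSparse2 s₁ s₂)) := rfl
  have hR : RIPconst A₂ s₃ = sInf (HiRIPAux.RIPset A₂ (Sparse s₃)) := rfl
  have hH3 : HiRIPconst3 A s₁ s₂ s₃ = sInf (HiRIPAux.RIPset A (HiSparse3 s₁ s₂ s₃)) := rfl
  set δ₁ : ℝ := HiRIPconst2 A₁ s₁ s₂ with hd1
  set δ₂ : ℝ := RIPconst A₂ s₃ with hd2
  have key : ∀ ε : ℝ, 0 < ε →
      HiRIPconst3 A s₁ s₂ s₃ ≤ (1 + (δ₁ + ε)) * (1 + (δ₂ + ε)) - 1 := by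
    intro ε hε
    have h₁ : δ₁ + ε ∈ HiRIPAux.RIPset A₁ (HiSparse2 s₁ s₂) :=
      HiRIPAux.RIPset_mem_add A₁ _ hε
    have h₂ : δ₂ + ε ∈ HiRIPAux.RIPset A₂ (Sparse s₃) :=
      HiRIPAux.RIPset_mem_add A₂ _ hε
    set a : ℝ := δ₁ + ε
    set b : ℝ := δ₂ + ε
    have ha0 : 0 ≤ a := h₁.1
    have hb0 : 0 ≤ b := h₂.1
    rw [hH3]
    refine csInf_le ⟨0, fun δ hδ => hδ.1⟩ ?_
    refine ⟨by nlinarith, fun x hx => ?_⟩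
    -- the blocks of x
    set Y : Fin M₂ → (Fin N₁' × Fin N₂') → ℂ :=
      fun r₂ j => A₂.mulVec (fun i₃ => x (j.1, j.2, i₃)) r₂ with hY
    -- pointwise action identity
    have hAct : ∀ r₁ r₂, A.mulVec x (r₁, r₂) = A₁.mulVec (Y r₂) r₁ := by
      intro r₁ r₂
      simp only [hY, hA, Matrix.mulVec, dotProduct, Fintype.sum_prod_type,
        Finset.mul_sum]
      exact Finset.sum_congr rfl fun j₁ _ => Finset.sum_congr rfl fun j₂ _ =>
        Finset.sum_congr rfl fun j₃ _ => by ring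
    have hsq : sqNorm (A.mulVec x) = ∑ r₂ : Fin M₂, sqNorm (A₁.mulVec (Y r₂)) := by
      unfold sqNorm
      rw [Fintype.sum_prod_type, Finset.sum_comm]
      exact Finset.sum_congr rfl fun r₂ _ => Finset.sum_congr rfl fun r₁ _ => by
        rw [hAct r₁ r₂]
    have hswap : ∑ r₂ : Fin M₂, sqNorm (Y r₂)
        = ∑ j : Fin N₁' × Fin N₂', sqNorm (A₂.mulVec fun i₃ => x (j.1, j.2, i₃)) := by
      unfold sqNorm
      rw [Finset.sum_comm]
    have hxsplit : sqNorm x = ∑ j : Fin N₁' × Fin N₂', sqNorm (fun i₃ => x (j.1, j.2, i₃)) := by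
      unfold sqNorm
      simp [Fintype.sum_prod_type]
    -- sparsity of Y r₂
    have hYsp : ∀ r₂, HiSparse2 s₁ s₂ (Y r₂) := by
      intro r₂
      constructor
      · refine le_trans (Finset.card_le_card ?_) hx.1
        intro j₁ hj₁
        simp only [Finset.mem_filter, Finset.mem_univ, true_and] at hj₁ ⊢
        intro h0
        apply hj₁
        funext j₂
        simp only [hY, Matrix.mulVec, dotProduct]
        refine Finset.sum_eq_zero fun i₃ _ => ?_
        have := congrFun h0 (j₂, i₃)
        simp only [Pi.zero_apply] at this
        simp [this]
      · intro j₁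
        refine le_trans (Finset.card_le_card ?_) (hx.2 j₁).1
        intro j₂ hj₂
        simp only [Finset.mem_filter, Finset.mem_univ, true_and] at hj₂ ⊢
        intro h0
        apply hj₂
        simp only [hY, Matrix.mulVec, dotProduct]
        refine Finset.sum_eq_zero fun i₃ _ => ?_
        have := congrFun h0 i₃
        simp only [Pi.zero_apply] at this
        simp [this]
    -- level-2 bounds summed
    set T : ℝ := ∑ j : Fin N₁' × Fin N₂', sqNorm (A₂.mulVec fun i₃ => x (j.1, j.2, i₃)) with hT
    have hT2lo : (1 - b) * sqNorm x ≤ T := by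
      rw [hxsplit, hT, Finset.mul_sum]
      exact Finset.sum_le_sum fun j _ => (h₂.2 _ ((hx.2 j.1).2 j.2)).1
    have hT2hi : T ≤ (1 + b) * sqNorm x := by
      rw [hxsplit, hT, Finset.mul_sum]
      exact Finset.sum_le_sum fun j _ => (h₂.2 _ ((hx.2 j.1).2 j.2)).2
    have hT0 : 0 ≤ T := Finset.sum_nonneg fun _ _ => HiRIPAux.sqNorm_nonneg _
    -- level-1 bounds summed
    have hYsum : ∑ r₂ : Fin M₂, sqNorm (Y r₂) = T := by rw [hswap, hT]
    have h1lo : (1 - a) * T ≤ sqNorm (A.mulVec x) := by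
      rw [hsq, ← hYsum, Finset.mul_sum]
      exact Finset.sum_le_sum fun r₂ _ => (h₁.2 _ (hYsp r₂)).1
    have h1hi : sqNorm (A.mulVec x) ≤ (1 + a) * T := by
      rw [hsq, ← hYsum, Finset.mul_sum]
      exact Finset.sum_le_sum fun r₂ _ => (h₁.2 _ (hYsp r₂)).2
    have hx0 := HiRIPAux.sqNorm_nonneg x
    have hAx0 := HiRIPAux.sqNorm_nonneg (A.mulVec x)
    constructor
    · -- lower bound
      rcases le_or_gt a 1 with hca | hca
      · nlinarith [mul_le_mul_of_nonneg_left hT2lo (by linarith : (0:ℝ) ≤ 1 - a)]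
      · nlinarith
    · -- upper bound
      nlinarith [mul_le_mul_of_nonneg_left hT2hi (by linarith : (0:ℝ) ≤ 1 + a)]
  -- take ε → 0⁺
  have hlim : Filter.Tendsto (fun ε : ℝ => (1 + (δ₁ + ε)) * (1 + (δ₂ + ε)) - 1)
      (nhdsWithin 0 (Set.Ioi 0)) (nhds ((1 + δ₁) * (1 + δ₂) - 1)) := by
    have hc : Continuous fun ε : ℝ => (1 + (δ₁ + ε)) * (1 + (δ₂ + ε)) - 1 := by fun_prop
    simpa using (hc.tendsto 0).mono_left nhdsWithin_le_nhds
  exact ge_of_tendsto hlim (Filter.eventually_of_mem self_mem_nhdsWithin fun ε hε => key ε hε)
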